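/- If G is a bipartite graph and S ⊆ V(G), then 𝓔(G_S) ≥ 𝓔(G), i.e., attaching loops at any vertex subset of a bipartite graph does not decrease the graph energy. -/

import Mathlib

open Matrix Finset

/-- The diagonal 0-1 matrix indicating the loop vertices in `S`. -/
def loopMat (n : ℕ) (S : Finset (Fin n)) : Matrix (Fin n) (Fin n) ℝ :=
  Matrix.of fun i j => if i = j ∧ i ∈ S then 1 else 0

lemma psd_add {n : ℕ} {M N : Matrix (Fin n) (Fin n) ℝ} (hM : M.PosSemidef) (hN : N.PosSemidef) :
    (M + N).PosSemidef := by
  refine ⟨hM.1.add hN.1, fun x => ?_⟩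
  have := add_nonneg (hM.2 x) (hN.2 x)
  convert this using 1
  simp only [Finsupp.sum, ← Finset.sum_add_distrib, Matrix.add_apply, mul_add, add_mul]

lemma psd_smul {n : ℕ} {M : Matrix (Fin n) (Fin n) ℝ} (hM : M.PosSemidef) {a : ℝ} (ha : 0 ≤ a) :
    (a • M).PosSemidef := by
  refine ⟨?_, fun x => ?_⟩
  · unfold Matrix.IsHermitian
    rw [Matrix.conjTranspose_smul, hM.1.eq]
    simp
  · have := mul_nonneg ha (hM.2 x)
    convert this using 1
    simp only [Finsupp.sum, Finset.mul_sum, Matrix.smul_apply, smul_eq_mul]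
    refine Finset.sum_congr rfl fun i _ => Finset.sum_congr rfl fun j _ => ?_
    ring

lemma psd_diag {n : ℕ} {M : Matrix (Fin n) (Fin n) ℝ} (hM : M.PosSemidef) (i : Fin n) :
    0 ≤ M i i := by
  exact hM.diag_nonneg

lemma trace_mul_le_sum_abs {n : ℕ} (B : Matrix (Fin n) (Fin n) ℝ) (hB : B.IsHermitian)
    (c : ℝ) (X : Matrix (Fin n) (Fin n) ℝ)
    (h1 : ((1 : Matrix (Fin n) (Fin n) ℝ) + X).PosSemidef)
    (h2 : ((1 : Matrix (Fin n) (Fin n) ℝ) - X).PosSemidef) :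
    Matrix.trace (X * (B - c • 1)) ≤ ∑ i, |hB.eigenvalues i - c| := by
  set U : Matrix (Fin n) (Fin n) ℝ := (hB.eigenvectorUnitary : Matrix (Fin n) (Fin n) ℝ) with hUdef
  have hUU : U * star U = 1 := Matrix.mem_unitaryGroup_iff.mp hB.eigenvectorUnitary.2
  have hUU' : star U * U = 1 := Matrix.mem_unitaryGroup_iff'.mp hB.eigenvectorUnitary.2
  have hspec : B = U * diagonal hB.eigenvalues * star U := by simpa using hB.spectral_theorem
  have hdec : B - c • 1 = U * diagonal (fun i => hB.eigenvalues i - c) * star U := by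
    have h1' : (diagonal (fun i => hB.eigenvalues i - c) : Matrix (Fin n) (Fin n) ℝ)
        = diagonal hB.eigenvalues - diagonal (fun _ => c) := by
      rw [← Matrix.diagonal_sub]
    rw [h1', Matrix.mul_sub, Matrix.sub_mul, ← hspec]
    congr 1
    rw [← Matrix.smul_one_eq_diagonal]
    rw [Matrix.mul_smul, Matrix.mul_one, Matrix.smul_mul, hUU]
  set N : Matrix (Fin n) (Fin n) ℝ := star U * X * U with hNdef
  have hNbound : ∀ i, |N i i| ≤ 1 := by
    intro i
    have hp1 : (star U * (1 + X) * U).PosSemidef := h1.conjTranspose_mul_mul_same U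
    have hp2 : (star U * (1 - X) * U).PosSemidef := h2.conjTranspose_mul_mul_same U
    have e1 : star U * (1 + X) * U = 1 + N := by
      rw [Matrix.mul_add, Matrix.mul_one, Matrix.add_mul, hUU', hNdef]
    have e2 : star U * (1 - X) * U = 1 - N := by
      rw [Matrix.mul_sub, Matrix.mul_one, Matrix.sub_mul, hUU', hNdef]
    have d1 := psd_diag (e1 ▸ hp1) i
    have d2 := psd_diag (e2 ▸ hp2) i
    simp only [Matrix.add_apply, Matrix.sub_apply, Matrix.one_apply_eq] at d1 d2
    rw [abs_le]; constructor <;> linarith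
  have htr : Matrix.trace (X * (B - c • 1)) = ∑ i, N i i * (hB.eigenvalues i - c) := by
    rw [hdec, ← Matrix.mul_assoc, Matrix.trace_mul_comm]
    simp only [← Matrix.mul_assoc]
    simp [Matrix.trace, Matrix.diag, Matrix.mul_diagonal, hNdef]
  rw [htr]
  apply Finset.sum_le_sum
  intro i _
  calc N i i * (hB.eigenvalues i - c) ≤ |N i i * (hB.eigenvalues i - c)| := le_abs_self _
    _ = |N i i| * |hB.eigenvalues i - c| := abs_mul _ _
    _ ≤ 1 * |hB.eigenvalues i - c| :=
        mul_le_mul_of_nonneg_right (hNbound i) (abs_nonneg _)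
    _ = _ := one_mul _

lemma eps_mul {a b : Fin 2} (h : a ≠ b) :
    (if a = 0 then (1:ℝ) else -1) * (if b = 0 then 1 else -1) = -1 := by
  fin_cases a <;> fin_cases b <;> simp_all

lemma loopMat_eq (n : ℕ) (S : Finset (Fin n)) :
    loopMat n S = diagonal (fun i => if i ∈ S then (1:ℝ) else 0) := by
  ext i j
  simp only [loopMat, Matrix.of_apply, Matrix.diagonal_apply]
  split_ifs <;> simp_all

/-- for a bipartite graph `G` and any `S ⊆ V(G)`, attaching loops does not
decrease the energy: `𝓔(G_S) ≥ 𝓔(G)`. -/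
theorem bipartite_selfLoop_energy_ge (n : ℕ) (G : SimpleGraph (Fin n))
    [DecidableRel G.Adj] (hbip : G.Colorable 2) (S : Finset (Fin n))
    (hA : (G.adjMatrix ℝ).IsHermitian)
    (hB : (G.adjMatrix ℝ + loopMat n S).IsHermitian) :
    (∑ i, |hA.eigenvalues i|) ≤ ∑ i, |hB.eigenvalues i - (S.card : ℝ) / n| := by
  classical
  obtain ⟨c0⟩ := hbip
  set A : Matrix (Fin n) (Fin n) ℝ := G.adjMatrix ℝ with hAdef
  set σ : ℝ := (S.card : ℝ) / n with hσ
  set U : Matrix (Fin n) (Fin n) ℝ := (hA.eigenvectorUnitary : Matrix (Fin n) (Fin n) ℝ) with hUdef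
  have hUU : U * star U = 1 := Matrix.mem_unitaryGroup_iff.mp hA.eigenvectorUnitary.2
  have hUU' : star U * U = 1 := Matrix.mem_unitaryGroup_iff'.mp hA.eigenvectorUnitary.2
  have hspecA : A = U * diagonal hA.eigenvalues * star U := by simpa using hA.spectral_theorem
  set s : Fin n → ℝ := fun i => if hA.eigenvalues i < 0 then -1 else 1 with hsdef
  set X₀ : Matrix (Fin n) (Fin n) ℝ := U * diagonal s * star U with hX0def
  have conjPSD : ∀ d : Fin n → ℝ, (∀ i, 0 ≤ d i) → (U * diagonal d * star U).PosSemidef := by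
    intro d hd
    have := (Matrix.PosSemidef.diagonal (d := d) hd).mul_mul_conjTranspose_same U
    simpa [Matrix.star_eq_conjTranspose] using this
  have h1X0 : (1 + X₀ : Matrix (Fin n) (Fin n) ℝ)
      = U * diagonal (fun i => 1 + s i) * star U := by
    have : (diagonal (fun i => 1 + s i) : Matrix (Fin n) (Fin n) ℝ)
        = 1 + diagonal s := by rw [← Matrix.diagonal_add, ← Matrix.diagonal_one]
    rw [this, Matrix.mul_add, Matrix.mul_one, Matrix.add_mul, hUU, hX0def]
  have h2X0 : (1 - X₀ : Matrix (Fin n) (Fin n) ℝ)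
      = U * diagonal (fun i => 1 - s i) * star U := by
    have : (diagonal (fun i => 1 - s i) : Matrix (Fin n) (Fin n) ℝ)
        = 1 - diagonal s := by rw [← Matrix.diagonal_sub, ← Matrix.diagonal_one]
    rw [this, Matrix.mul_sub, Matrix.mul_one, Matrix.sub_mul, hUU, hX0def]
  have hP1 : ((1 : Matrix (Fin n) (Fin n) ℝ) + X₀).PosSemidef := by
    rw [h1X0]
    refine conjPSD _ fun i => ?_
    by_cases h : hA.eigenvalues i < 0 <;> simp [hsdef, h]
  have hP2 : ((1 : Matrix (Fin n) (Fin n) ℝ) - X₀).PosSemidef := by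
    rw [h2X0]
    refine conjPSD _ fun i => ?_
    by_cases h : hA.eigenvalues i < 0 <;> simp [hsdef, h]
  have htrX0A : Matrix.trace (X₀ * A) = ∑ i, |hA.eigenvalues i| := by
    have hmul : X₀ * A = U * diagonal (fun i => s i * hA.eigenvalues i) * star U := by
      rw [hX0def]
      conv_lhs => rw [hspecA]
      simp only [Matrix.mul_assoc]
      rw [← Matrix.mul_assoc (star U) U, hUU', Matrix.one_mul,
        ← Matrix.mul_assoc (diagonal s), Matrix.diagonal_mul_diagonal]
    rw [hmul, Matrix.trace_mul_comm, ← Matrix.mul_assoc, hUU',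
      Matrix.one_mul, Matrix.trace_diagonal]
    refine Finset.sum_congr rfl fun i _ => ?_
    by_cases h : hA.eigenvalues i < 0
    · simp [hsdef, h, abs_of_neg h]
    · simp [hsdef, h, abs_of_nonneg (not_lt.mp h)]
  set ε : Fin n → ℝ := fun i => if c0 i = 0 then 1 else -1 with hεdef
  set J : Matrix (Fin n) (Fin n) ℝ := diagonal ε with hJdef
  have hJJ : J * J = 1 := by
    rw [hJdef, Matrix.diagonal_mul_diagonal]
    have : (fun i => ε i * ε i) = fun _ => (1:ℝ) := funext fun i => by
      by_cases h : c0 i = 0 <;> simp [hεdef, h]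
    rw [this]
    exact Matrix.diagonal_one
  have hJH : J.conjTranspose = J := by
    rw [hJdef, Matrix.diagonal_conjTranspose]
    congr 1
  have hJAJ : J * A * J = -A := by
    ext i j
    simp only [hJdef, Matrix.mul_diagonal, Matrix.diagonal_mul, Matrix.neg_apply]
    by_cases h : G.Adj i j
    · have hne : c0 i ≠ c0 j := c0.valid h
      have hA1 : A i j = 1 := by simp [hAdef, h]
      rw [hA1]
      have := eps_mul hne
      simp only [hεdef]
      linarith [this]
    · have hA0 : A i j = 0 := by simp [hAdef, h]
      rw [hA0]; ring
  set Δ : Matrix (Fin n) (Fin n) ℝ := loopMat n S - σ • 1 with hΔdef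
  have hΔdiag : Δ = diagonal (fun i => (if i ∈ S then (1:ℝ) else 0) - σ) := by
    rw [hΔdef, loopMat_eq, Matrix.smul_one_eq_diagonal, ← Matrix.diagonal_sub]
  have hJΔJ : J * Δ * J = Δ := by
    rw [hΔdiag, hJdef, Matrix.diagonal_mul_diagonal, Matrix.diagonal_mul_diagonal]
    refine congrArg diagonal (funext fun i => ?_)
    have hε2 : ε i * ε i = 1 := by by_cases h : c0 i = 0 <;> simp [hεdef, h]
    show ε i * ((if i ∈ S then (1:ℝ) else 0) - σ) * ε i = (if i ∈ S then (1:ℝ) else 0) - σ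
    rw [mul_right_comm, hε2, one_mul]
  set X' : Matrix (Fin n) (Fin n) ℝ := (2⁻¹ : ℝ) • (X₀ - J * X₀ * J) with hX'def
  have hPSDJ : ∀ {M : Matrix (Fin n) (Fin n) ℝ}, M.PosSemidef → (J * M * J).PosSemidef := by
    intro M hM
    have := hM.mul_mul_conjTranspose_same J
    rw [hJH] at this
    exact this
  have h1' : ((1 : Matrix (Fin n) (Fin n) ℝ) + X').PosSemidef := by
    have key : (1 + X' : Matrix (Fin n) (Fin n) ℝ)
        = (2⁻¹:ℝ) • ((1 + X₀) + J * (1 - X₀) * J) := by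
      rw [Matrix.mul_sub, Matrix.mul_one, Matrix.sub_mul, hJJ, hX'def]
      module
    rw [key]
    exact psd_smul (psd_add hP1 (hPSDJ hP2)) (by norm_num)
  have h2' : ((1 : Matrix (Fin n) (Fin n) ℝ) - X').PosSemidef := by
    have key : (1 - X' : Matrix (Fin n) (Fin n) ℝ)
        = (2⁻¹:ℝ) • ((1 - X₀) + J * (1 + X₀) * J) := by
      rw [Matrix.mul_add, Matrix.mul_one, Matrix.add_mul, hJJ, hX'def]
      module
    rw [key]
    exact psd_smul (psd_add hP2 (hPSDJ hP1)) (by norm_num)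
  have hM : A + loopMat n S - σ • 1 = A + Δ := by rw [hΔdef]; abel
  have hJMJ : J * (A + Δ) * J = -A + Δ := by
    rw [Matrix.mul_add, Matrix.add_mul, hJAJ, hJΔJ]
  have htr' : Matrix.trace (X' * (A + Δ)) = ∑ i, |hA.eigenvalues i| := by
    rw [hX'def, Matrix.smul_mul, Matrix.trace_smul, Matrix.sub_mul, Matrix.trace_sub]
    have hcyc : Matrix.trace (J * X₀ * J * (A + Δ))
        = Matrix.trace (X₀ * (J * (A + Δ) * J)) := by
      rw [Matrix.mul_assoc (J * X₀) J (A + Δ), Matrix.trace_mul_comm,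
        ← Matrix.mul_assoc (J * (A + Δ)) J X₀, Matrix.trace_mul_comm]
    rw [hcyc, hJMJ, Matrix.mul_add, Matrix.mul_add, Matrix.trace_add, Matrix.trace_add,
      Matrix.mul_neg, Matrix.trace_neg, htrX0A]
    simp only [smul_eq_mul]
    ring
  have final := trace_mul_le_sum_abs (A + loopMat n S) hB σ X' h1' h2'
  rw [hM, htr'] at final
  exact final
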